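/- For all integers $b_0, b_1, b_2, b_3, c_0, c_1, c_2, c_3, d_0, d_1, d_2, d_3, e_0, e_1, e_2, e_3$, the following three equalities hold: $D_4(b_0,b_1,b_2,b_3)\widetilde{D}_4(c_0,c_1,c_2,c_3)D_4(d_0,d_1,d_2,d_3)\widetilde{D}_4(e_0,e_1,e_2,e_3) = D_4(b_1,b_2,b_3,b_0)\widetilde{D}_4(c_1,c_2,c_3,-c_0)D_4(d_1,d_2,d_3,d_0)\widetilde{D}_4(e_1,e_2,e_3,-e_0) = D_4(b_2,b_3,b_0,b_1)\widetilde{D}_4(c_2,c_3,-c_0,-c_1)D_4(d_2,d_3,d_0,d_1)\widetilde{D}_4(e_2,e_3,-e_0,-e_1) = D_4(b_3,b_0,b_1,b_2)\widetilde{D}_4(c_3,-c_0,-c_1,-c_2)D_4(d_3,d_0,d_1,d_2)\widetilde{D}_4(e_3,-e_0,-e_1,-e_2)$. -/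

import Mathlib

/-- The group determinant of `C₄`: the determinant of the `4 × 4` circulant matrix whose
`(i, j)` entry is `x_{(i - j) mod 4}`. -/
def D4 {R : Type*} [CommRing R] (x0 x1 x2 x3 : R) : R :=
  Matrix.det !![x0, x3, x2, x1; x1, x0, x3, x2; x2, x1, x0, x3; x3, x2, x1, x0]

/-- `D̃₄`. -/
def D4t {R : Type*} [CommRing R] (x0 x1 x2 x3 : R) : R :=
  (x0 ^ 2 - x2 ^ 2 + 2 * x1 * x3) ^ 2 + (x1 ^ 2 - x3 ^ 2 - 2 * x0 * x2) ^ 2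

lemma D4_shift {R : Type*} [CommRing R] (x0 x1 x2 x3 : R) :
    D4 x1 x2 x3 x0 = -D4 x0 x1 x2 x3 := by
  simp [D4, Matrix.det_succ_row_zero, Fin.sum_univ_succ, Fin.succAbove]; ring

lemma D4t_shift {R : Type*} [CommRing R] (x0 x1 x2 x3 : R) :
    D4t x1 x2 x3 (-x0) = D4t x0 x1 x2 x3 := by
  simp [D4t]; ring

/-- cyclic-shift invariance of the product `D₄(b) D̃₄(c) D₄(d) D̃₄(e)`. -/
theorem D4_D4t_prod_shift (b0 b1 b2 b3 c0 c1 c2 c3 d0 d1 d2 d3 e0 e1 e2 e3 : ℤ) :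
    (D4 b0 b1 b2 b3 * D4t c0 c1 c2 c3 * D4 d0 d1 d2 d3 * D4t e0 e1 e2 e3 =
      D4 b1 b2 b3 b0 * D4t c1 c2 c3 (-c0) * D4 d1 d2 d3 d0 * D4t e1 e2 e3 (-e0)) ∧
    (D4 b0 b1 b2 b3 * D4t c0 c1 c2 c3 * D4 d0 d1 d2 d3 * D4t e0 e1 e2 e3 =
      D4 b2 b3 b0 b1 * D4t c2 c3 (-c0) (-c1) * D4 d2 d3 d0 d1 * D4t e2 e3 (-e0) (-e1)) ∧
    (D4 b0 b1 b2 b3 * D4t c0 c1 c2 c3 * D4 d0 d1 d2 d3 * D4t e0 e1 e2 e3 =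
      D4 b3 b0 b1 b2 * D4t c3 (-c0) (-c1) (-c2) * D4 d3 d0 d1 d2 *
        D4t e3 (-e0) (-e1) (-e2)) := by
  have h1 : D4t c2 c3 (-c0) (-c1) = D4t c0 c1 c2 c3 := by
    rw [D4t_shift c1 c2 c3 (-c0), D4t_shift]
  have h2 : D4t e2 e3 (-e0) (-e1) = D4t e0 e1 e2 e3 := by
    rw [D4t_shift e1 e2 e3 (-e0), D4t_shift]
  have h3 : D4t c3 (-c0) (-c1) (-c2) = D4t c0 c1 c2 c3 := by
    rw [D4t_shift c2 c3 (-c0) (-c1), h1]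
  have h4 : D4t e3 (-e0) (-e1) (-e2) = D4t e0 e1 e2 e3 := by
    rw [D4t_shift e2 e3 (-e0) (-e1), h2]
  refine ⟨?_, ?_, ?_⟩
  · rw [D4_shift b0, D4_shift d0, D4t_shift c0, D4t_shift e0]; ring
  · rw [D4_shift b1, D4_shift b0, D4_shift d1, D4_shift d0, h1, h2]; ring
  · rw [D4_shift b2, D4_shift b1, D4_shift b0, D4_shift d2, D4_shift d1, D4_shift d0, h3, h4]
    ring
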